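/- The minimum number of monotone block moves needed to sort a permutation π to the identity is at least max(bp(π)/3, des(π), gap(π)/2, des(π⁻¹), gap(π⁻¹)/2). -/

import Mathlib

/-- The identity permutation of `{1,…,n}` as a list `[1, 2, …, n]`. -/
def idL (n : ℕ) : List ℕ := (List.range n).map (· + 1)

/-- `l` is a permutation of `{1,…,n}` (written as a list). -/
def IsPermList (n : ℕ) (l : List ℕ) : Prop := l.Perm (idL n)

/-- The extension of `π` by `π₀ = 0` and `π_{n+1} = n+1`. -/
def ext (n : ℕ) (l : List ℕ) : List ℕ := 0 :: (l ++ [n + 1])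

/-- Number of adjacent pairs of the extended permutation satisfying `p`. -/
def adjCount (p : ℕ → ℕ → Bool) (n : ℕ) (l : List ℕ) : ℕ :=
  ((ext n l).zip (ext n l).tail).countP (fun q => p q.1 q.2)

/-- Number of breakpoints: adjacent pairs with `π_{i+1} ≠ π_i + 1`. -/
def bp (n : ℕ) (l : List ℕ) : ℕ := adjCount (fun a b => b ≠ a + 1) n l

/-- Number of descents: adjacent pairs with `π_i > π_{i+1}`. -/
def des (n : ℕ) (l : List ℕ) : ℕ := adjCount (fun a b => b < a) n l

/-- Number of gaps: adjacent pairs with `π_{i+1} > π_i + 1`. -/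
def gap (n : ℕ) (l : List ℕ) : ℕ := adjCount (fun a b => a + 1 < b) n l

/-- Number of inverse descents: pairs of positions `i < j` with `π_i = π_j + 1`. -/
def invDes (l : List ℕ) : ℕ :=
  (Finset.univ.filter (fun p : Fin l.length × Fin l.length =>
    (p.1 : ℕ) < (p.2 : ℕ) ∧ l.get p.1 = l.get p.2 + 1)).card

/-- Number of inverse gaps: pairs of positions with `i > j + 1` and `π_i = π_j + 1`. -/
def invGap (l : List ℕ) : ℕ :=
  (Finset.univ.filter (fun p : Fin l.length × Fin l.length =>
    (p.2 : ℕ) + 1 < (p.1 : ℕ) ∧ l.get p.1 = l.get p.2 + 1)).card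

/-- `l'` is obtained from `l` by a block move: exchanging two nonempty
consecutive blocks `B` and `C`. -/
def IsBlockMove (l l' : List ℕ) : Prop :=
  ∃ A B C D : List ℕ, B ≠ [] ∧ C ≠ [] ∧ l = A ++ B ++ C ++ D ∧ l' = A ++ C ++ B ++ D

/-- A monotone block move: every element of the first (left) exchanged block
exceeds every element of the second (right) exchanged block. -/
def IsMonotoneBlockMove (l l' : List ℕ) : Prop :=
  ∃ A B C D : List ℕ, B ≠ [] ∧ C ≠ [] ∧ (∀ x ∈ B, ∀ y ∈ C, y < x) ∧
    l = A ++ B ++ C ++ D ∧ l' = A ++ C ++ B ++ D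

/-- A single-element block move: one of the two exchanged blocks has size one. -/
def IsSingleBlockMove (l l' : List ℕ) : Prop :=
  ∃ A B C D : List ℕ, B ≠ [] ∧ C ≠ [] ∧ (B.length = 1 ∨ C.length = 1) ∧
    l = A ++ B ++ C ++ D ∧ l' = A ++ C ++ B ++ D

/-- A monotone single-element block move. -/
def IsMonoSingleBlockMove (l l' : List ℕ) : Prop :=
  ∃ A B C D : List ℕ, B ≠ [] ∧ C ≠ [] ∧ (B.length = 1 ∨ C.length = 1) ∧
    (∀ x ∈ B, ∀ y ∈ C, y < x) ∧ l = A ++ B ++ C ++ D ∧ l' = A ++ C ++ B ++ D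

/-- `l` can be transformed into `target` by `t` moves of type `R`. -/
def SortsIn (R : List ℕ → List ℕ → Prop) (l target : List ℕ) (t : ℕ) : Prop :=
  ∃ c : ℕ → List ℕ, c 0 = l ∧ c t = target ∧ ∀ i < t, R (c i) (c (i + 1))

/-- Length of the longest increasing subsequence of `l`. -/
def lis (l : List ℕ) : ℕ :=
  ((l.sublists.filter (fun s => decide (List.IsChain (· < ·) s))).map List.length).foldr max 0



def pl (l : List ℕ) : List (ℕ × ℕ) := l.zip l.tail

lemma pl_append (X Y : List ℕ) (hX : X ≠ []) (hY : Y ≠ []) :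
    pl (X ++ Y) = pl X ++ (X.getLast hX, Y.head hY) :: pl Y := by
  induction X with
  | nil => simp at hX
  | cons a X ih =>
    cases X with
    | nil =>
      cases Y with
      | nil => simp at hY
      | cons b Y => simp [pl]
    | cons a' X' =>
      have h2 : (a' :: X') ≠ [] := by simp
      have := ih h2
      simp only [List.cons_append, pl] at *
      simp only [List.zip, List.tail_cons, List.cons_append] at *
      simp only [List.zipWith_cons_cons, this, List.cons_append,
        List.getLast_cons h2]

def bnd (p : ℕ → ℕ → Bool) (x y : ℕ) : ℕ := if p x y then 1 else 0

def cnt (p : ℕ → ℕ → Bool) (L : List ℕ) : ℕ := (pl L).countP (fun q => p q.1 q.2)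

lemma cnt_append (p : ℕ → ℕ → Bool) (X Y : List ℕ) (hX : X ≠ []) (hY : Y ≠ []) :
    cnt p (X ++ Y) = cnt p X + bnd p (X.getLast hX) (Y.head hY) + cnt p Y := by
  unfold cnt bnd
  rw [pl_append X Y hX hY]
  simp [List.countP_append, List.countP_cons]
  omega

lemma head_app (X Y : List ℕ) (hX : X ≠ []) (h : X ++ Y ≠ []) :
    (X ++ Y).head h = X.head hX := by
  rw [List.head_append]
  simp [hX]

lemma cnt_four (p : ℕ → ℕ → Bool) (W X Y Z : List ℕ)
    (hW : W ≠ []) (hX : X ≠ []) (hY : Y ≠ []) (hZ : Z ≠ []) :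
    cnt p (W ++ (X ++ (Y ++ Z))) =
      cnt p W + bnd p (W.getLast hW) (X.head hX) + cnt p X +
      bnd p (X.getLast hX) (Y.head hY) + cnt p Y +
      bnd p (Y.getLast hY) (Z.head hZ) + cnt p Z := by
  have hYZ : Y ++ Z ≠ [] := by simp [hY]
  have hXYZ : X ++ (Y ++ Z) ≠ [] := by simp [hX]
  rw [cnt_append p W _ hW hXYZ, cnt_append p X _ hX hYZ, cnt_append p Y Z hY hZ,
    head_app X (Y++Z) hX hXYZ, head_app Y Z hY hYZ]
  omega




lemma adjCount_eq (p : ℕ → ℕ → Bool) (n : ℕ) (l : List ℕ) :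
    adjCount p n l = cnt p (ext n l) := rfl

lemma bnd_le_one (p : ℕ → ℕ → Bool) (x y : ℕ) : bnd p x y ≤ 1 := by
  unfold bnd; split <;> omega

lemma bnd_mono (p : ℕ → ℕ → Bool) {x y x' y' : ℕ}
    (h : p x y = true → p x' y' = true) : bnd p x y ≤ bnd p x' y' := by
  unfold bnd; split
  · rw [h ‹_›]; simp
  · omega

lemma ext_decomp (n : ℕ) (A B C D : List ℕ) :
    ext n (A ++ B ++ C ++ D) = (0 :: A) ++ (B ++ (C ++ (D ++ [n+1]))) := by
  simp [ext]

section Move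
variable (n : ℕ) (A B C D : List ℕ)
variable (hB : B ≠ []) (hC : C ≠ [])
include hB hC

lemma move_expand (p : ℕ → ℕ → Bool) :
    adjCount p n (A ++ B ++ C ++ D) =
      cnt p (0::A) + bnd p ((0::A).getLast (by simp)) (B.head hB) + cnt p B +
      bnd p (B.getLast hB) (C.head hC) + cnt p C +
      bnd p (C.getLast hC) ((D ++ [n+1]).head (by simp)) + cnt p (D ++ [n+1]) := by
  rw [adjCount_eq, ext_decomp, cnt_four p _ _ _ _ (by simp) hB hC (by simp)]

lemma move_bp :
    adjCount (fun a b => b ≠ a + 1) n (A ++ B ++ C ++ D) ≤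
      adjCount (fun a b => b ≠ a + 1) n (A ++ C ++ B ++ D) + 3 := by
  rw [move_expand n A B C D hB hC, move_expand n A C B D hC hB]
  have h1 := bnd_le_one (fun a b => b ≠ a + 1) ((0::A).getLast (by simp)) (B.head hB)
  have h2 := bnd_le_one (fun a b => b ≠ a + 1) (B.getLast hB) (C.head hC)
  have h3 := bnd_le_one (fun a b => b ≠ a + 1) (C.getLast hC)
    ((D ++ [n+1]).head (by simp))
  omega

lemma move_des (hm : ∀ x ∈ B, ∀ y ∈ C, y < x) :
    adjCount (fun a b => b < a) n (A ++ B ++ C ++ D) ≤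
      adjCount (fun a b => b < a) n (A ++ C ++ B ++ D) + 1 := by
  rw [move_expand n A B C D hB hC, move_expand n A C B D hC hB]
  have hcb : C.head hC < B.head hB := hm _ (List.head_mem hB) _ (List.head_mem hC)
  have hlast : C.getLast hC < B.getLast hB :=
    hm _ (List.getLast_mem hB) _ (List.getLast_mem hC)
  have h1 : bnd (fun a b => b < a) ((0::A).getLast (by simp)) (B.head hB) ≤
      bnd (fun a b => b < a) ((0::A).getLast (by simp)) (C.head hC) := by
    apply bnd_mono; simp only [decide_eq_true_eq]; omega
  have h2 := bnd_le_one (fun a b => b < a) (B.getLast hB) (C.head hC)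
  have h3 : bnd (fun a b => b < a) (C.getLast hC) ((D ++ [n+1]).head (by simp)) ≤
      bnd (fun a b => b < a) (B.getLast hB) ((D ++ [n+1]).head (by simp)) := by
    apply bnd_mono; simp only [decide_eq_true_eq]; omega
  omega

lemma move_gap (hm : ∀ x ∈ B, ∀ y ∈ C, y < x) :
    adjCount (fun a b => a + 1 < b) n (A ++ B ++ C ++ D) ≤
      adjCount (fun a b => a + 1 < b) n (A ++ C ++ B ++ D) + 2 := by
  rw [move_expand n A B C D hB hC, move_expand n A C B D hC hB]
  have hcb : C.head hC < B.getLast hB :=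
    hm _ (List.getLast_mem hB) _ (List.head_mem hC)
  have h2 : bnd (fun a b => a + 1 < b) (B.getLast hB) (C.head hC) = 0 := by
    unfold bnd; simp only [decide_eq_true_eq]; split <;> omega
  have h1 := bnd_le_one (fun a b => a + 1 < b) ((0::A).getLast (by simp)) (B.head hB)
  have h3 := bnd_le_one (fun a b => a + 1 < b) (C.getLast hC)
    ((D ++ [n+1]).head (by simp))
  omega

end Move



lemma pl_consec (m : ℕ) : ∀ q ∈ pl (List.range m), q.2 = q.1 + 1 := by
  intro q hq
  unfold pl at hq
  obtain ⟨i, hi, hqe⟩ := List.mem_iff_getElem.1 hq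
  rw [List.getElem_zip] at hqe
  rw [← hqe]
  simp [List.getElem_tail, Nat.add_comm]

lemma ext_idL (n : ℕ) : ext n (idL n) = List.range (n+2) := by
  rw [show n+2 = (n+1)+1 from rfl, List.range_succ_eq_map, List.range_succ]
  simp [ext, idL, Nat.succ_eq_add_one]

lemma adjCount_idL (p : ℕ → ℕ → Bool) (n : ℕ) (hp : ∀ a, p a (a+1) = false) :
    adjCount p n (idL n) = 0 := by
  rw [adjCount_eq, ext_idL]
  unfold cnt
  rw [List.countP_eq_zero]
  intro q hq
  have := pl_consec (n+2) q hq
  simp [this, hp]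

lemma get_idL (n : ℕ) (i : Fin (idL n).length) : (idL n).get i = (i : ℕ) + 1 := by
  rw [List.get_eq_getElem]; simp [idL]

lemma invDes_idL (n : ℕ) : invDes (idL n) = 0 := by
  unfold invDes
  rw [Finset.card_eq_zero, Finset.filter_eq_empty_iff]
  rintro p -
  rw [get_idL, get_idL]
  omega

lemma invGap_idL (n : ℕ) : invGap (idL n) = 0 := by
  unfold invGap
  rw [Finset.card_eq_zero, Finset.filter_eq_empty_iff]
  rintro p -
  rw [get_idL, get_idL]
  omega

lemma card_pairs (l : List ℕ) (h : l.Nodup) (R : ℕ → ℕ → Prop) [DecidableRel R] :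
    (Finset.univ.filter (fun p : Fin l.length × Fin l.length =>
      R (p.1 : ℕ) (p.2 : ℕ) ∧ l.get p.1 = l.get p.2 + 1)).card
    = (l.toFinset.filter (fun v => (v+1) ∈ l ∧
        R (l.idxOf (v+1)) (l.idxOf v))).card := by
  apply Finset.card_bij' (fun p _ => l.get p.2)
    (fun v hv => (⟨l.idxOf (v+1), List.idxOf_lt_length_iff.2
        (Finset.mem_filter.1 hv).2.1⟩,
      ⟨l.idxOf v, List.idxOf_lt_length_iff.2
        (List.mem_toFinset.1 (Finset.mem_filter.1 hv).1)⟩))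
  case hi =>
    intro p hp
    rw [Finset.mem_filter] at hp ⊢
    obtain ⟨-, hR, hval⟩ := hp
    refine ⟨List.mem_toFinset.2 (l.get_mem _), ?_, ?_⟩
    · rw [← hval]; exact l.get_mem _
    · have e1 : l.idxOf (l.get p.2 + 1) = (p.1 : ℕ) := by
        rw [← hval]; exact List.get_idxOf h _
      have e2 : l.idxOf (l.get p.2) = (p.2 : ℕ) := List.get_idxOf h _
      rw [e1, e2]; exact hR
  case hj =>
    intro v hv
    rw [Finset.mem_filter] at hv ⊢
    refine ⟨Finset.mem_univ _, hv.2.2, ?_⟩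
    exact (List.idxOf_get _).trans (by rw [List.idxOf_get])
  case left_inv =>
    intro p hp
    rw [Finset.mem_filter] at hp
    obtain ⟨-, hR, hval⟩ := hp
    apply Prod.ext <;> apply Fin.ext
    · show l.idxOf (l.get p.2 + 1) = (p.1 : ℕ)
      rw [← hval]; exact List.get_idxOf h _
    · exact List.get_idxOf h _
  case right_inv =>
    intro v hv
    exact List.idxOf_get _

lemma invDes_eq (l : List ℕ) (h : l.Nodup) :
    invDes l = (l.toFinset.filter (fun v => (v+1) ∈ l ∧
      l.idxOf (v+1) < l.idxOf v)).card :=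
  card_pairs l h (· < ·)

lemma invGap_eq (l : List ℕ) (h : l.Nodup) :
    invGap l = (l.toFinset.filter (fun v => (v+1) ∈ l ∧
      l.idxOf v + 1 < l.idxOf (v+1))).card :=
  card_pairs l h (fun a b => b + 1 < a)

lemma idx_cases (A B C D : List ℕ) (hnd : (A++B++C++D).Nodup) (x : ℕ)
    (hx : x ∈ A++B++C++D) :
    (x ∈ A ∧ (A++B++C++D).idxOf x = A.idxOf x ∧
      (A++C++B++D).idxOf x = A.idxOf x ∧ A.idxOf x < A.length) ∨
    (x ∈ B ∧ (A++B++C++D).idxOf x = A.length + B.idxOf x ∧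
      (A++C++B++D).idxOf x = A.length + C.length + B.idxOf x ∧
      B.idxOf x < B.length) ∨
    (x ∈ C ∧ (A++B++C++D).idxOf x = A.length + B.length + C.idxOf x ∧
      (A++C++B++D).idxOf x = A.length + C.idxOf x ∧ C.idxOf x < C.length) ∨
    (x ∈ D ∧ (A++B++C++D).idxOf x = A.length + B.length + C.length + D.idxOf x ∧
      (A++C++B++D).idxOf x = A.length + C.length + B.length + D.idxOf x ∧
      D.idxOf x < D.length) := by
  have hnd' := hnd
  simp only [List.append_assoc, List.nodup_append] at hnd'
  obtain ⟨hA, ⟨hBn, ⟨hCn, hDn, hCD⟩, hBCD⟩, hABCD⟩ := hnd'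
  simp only [List.append_assoc, List.mem_append] at hx
  rcases hx with hxA | hxB | hxC | hxD
  · left
    have h1 : x ∈ A ++ (B ++ (C ++ D)) → _ := fun _ => trivial
    refine ⟨hxA, ?_, ?_, List.idxOf_lt_length_iff.2 hxA⟩
    · rw [List.append_assoc, List.append_assoc, List.idxOf_append_of_mem hxA]
    · rw [List.append_assoc, List.append_assoc, List.idxOf_append_of_mem hxA]
  · right; left
    have hxA' : x ∉ A := fun hh => hABCD x hh x (by simp [hxB]) rfl
    have hxC' : x ∉ C := fun hh => hBCD x hxB x (by simp [hh]) rfl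
    refine ⟨hxB, ?_, ?_, List.idxOf_lt_length_iff.2 hxB⟩
    · rw [List.append_assoc, List.append_assoc, List.idxOf_append_of_notMem hxA',
        List.idxOf_append_of_mem hxB]
    · rw [List.append_assoc, List.append_assoc, List.idxOf_append_of_notMem hxA',
        List.idxOf_append_of_notMem hxC', List.idxOf_append_of_mem hxB]
      omega
  · right; right; left
    have hxA' : x ∉ A := fun hh => hABCD x hh x (by simp [hxC]) rfl
    have hxB' : x ∉ B := fun hh => hBCD x hh x (by simp [hxC]) rfl
    refine ⟨hxC, ?_, ?_, List.idxOf_lt_length_iff.2 hxC⟩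
    · rw [List.append_assoc, List.append_assoc, List.idxOf_append_of_notMem hxA',
        List.idxOf_append_of_notMem hxB', List.idxOf_append_of_mem hxC]
      omega
    · rw [List.append_assoc, List.append_assoc, List.idxOf_append_of_notMem hxA',
        List.idxOf_append_of_mem hxC]
  · right; right; right
    have hxA' : x ∉ A := fun hh => hABCD x hh x (by simp [hxD]) rfl
    have hxB' : x ∉ B := fun hh => hBCD x hh x (by simp [hxD]) rfl
    have hxC' : x ∉ C := fun hh => hCD x hh x hxD rfl
    refine ⟨hxD, ?_, ?_, List.idxOf_lt_length_iff.2 hxD⟩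
    · rw [List.append_assoc, List.append_assoc, List.idxOf_append_of_notMem hxA',
        List.idxOf_append_of_notMem hxB', List.idxOf_append_of_notMem hxC']
      omega
    · rw [List.append_assoc, List.append_assoc, List.idxOf_append_of_notMem hxA',
        List.idxOf_append_of_notMem hxC', List.idxOf_append_of_notMem hxB']
      omega

lemma perm_move (A B C D : List ℕ) : (A++B++C++D).Perm (A++C++B++D) := by
  simp only [List.append_assoc]
  refine List.Perm.append_left A ?_
  rw [← List.append_assoc, ← List.append_assoc]
  exact (List.perm_append_comm).append_right D

lemma toFinset_perm {l l' : List ℕ} (h : l.Perm l') : l.toFinset = l'.toFinset := by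
  ext x; simp [h.mem_iff]

lemma move_invDes (A B C D : List ℕ) (hnd : (A++B++C++D).Nodup)
    (hm : ∀ x ∈ B, ∀ y ∈ C, y < x) :
    invDes (A++B++C++D) ≤ invDes (A++C++B++D) + 1 := by
  have hperm := perm_move A B C D
  have hnd' : (A++C++B++D).Nodup := hperm.nodup_iff.1 hnd
  rw [invDes_eq _ hnd, invDes_eq _ hnd', toFinset_perm hperm]
  set T := (A++C++B++D).toFinset with hT
  set S1 := T.filter (fun v => (v+1) ∈ (A++B++C++D) ∧
    (A++B++C++D).idxOf (v+1) < (A++B++C++D).idxOf v) with hS1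
  set S2 := T.filter (fun v => (v+1) ∈ (A++C++B++D) ∧
    (A++C++B++D).idxOf (v+1) < (A++C++B++D).idxOf v) with hS2
  have key : ∀ v ∈ S1 \ S2, v ∈ C ∧ (v+1) ∈ B := by
    intro v hv
    rw [Finset.mem_sdiff, hS1, hS2, Finset.mem_filter, Finset.mem_filter] at hv
    obtain ⟨⟨hvT, hv1mem, hlt⟩, hnot⟩ := hv
    have hvmem : v ∈ A++B++C++D := hperm.symm.mem_iff.1 (List.mem_toFinset.1 hvT)
    have hv1mem' : (v+1) ∈ A++C++B++D := (perm_move A B C D).mem_iff.1 hv1mem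
    have hge : (A++C++B++D).idxOf v ≤ (A++C++B++D).idxOf (v+1) := by
      by_contra hcon
      exact hnot ⟨hvT, hv1mem', by omega⟩
    have c1 := idx_cases A B C D hnd v hvmem
    have c2 := idx_cases A B C D hnd (v+1) hv1mem
    rcases c1 with ⟨h1,e1,e1',b1⟩|⟨h1,e1,e1',b1⟩|⟨h1,e1,e1',b1⟩|⟨h1,e1,e1',b1⟩ <;>
      rcases c2 with ⟨h2,e2,e2',b2⟩|⟨h2,e2,e2',b2⟩|⟨h2,e2,e2',b2⟩|⟨h2,e2,e2',b2⟩ <;>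
      first
        | (exact ⟨h1, h2⟩)
        | omega
  have huniq : (S1 \ S2).card ≤ 1 := by
    rw [Finset.card_le_one]
    intro a ha b hb
    obtain ⟨haC, ha1B⟩ := key a ha
    obtain ⟨hbC, hb1B⟩ := key b hb
    have h1 := hm _ ha1B _ hbC
    have h2 := hm _ hb1B _ haC
    omega
  calc S1.card ≤ (S1 \ S2).card + S2.card := Finset.card_le_card_sdiff_add_card
    _ ≤ S2.card + 1 := by omega

lemma last_elem_eq {X : List ℕ} {v : ℕ} (hv : v ∈ X) (hidx : X.idxOf v = X.length - 1) :
    v = X.getD (X.length - 1) 0 := by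
  have hlt : X.idxOf v < X.length := List.idxOf_lt_length_iff.2 hv
  have h0 : X.length - 1 < X.length := by omega
  rw [List.getD_eq_get (i := ⟨_, h0⟩), ← List.idxOf_get hlt]
  congr 1
  exact Fin.ext hidx

lemma move_invGap (A B C D : List ℕ) (hB : B ≠ [])
    (hm : ∀ x ∈ B, ∀ y ∈ C, y < x) (hnd : (A++B++C++D).Nodup) :
    invGap (A++B++C++D) ≤ invGap (A++C++B++D) + 2 := by
  have hBlen : 0 < B.length := List.length_pos_iff.2 hB
  have hperm := perm_move A B C D
  have hnd' : (A++C++B++D).Nodup := hperm.nodup_iff.1 hnd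
  rw [invGap_eq _ hnd, invGap_eq _ hnd', toFinset_perm hperm]
  set T := (A++C++B++D).toFinset with hT
  set S1 := T.filter (fun v => (v+1) ∈ (A++B++C++D) ∧
    (A++B++C++D).idxOf v + 1 < (A++B++C++D).idxOf (v+1)) with hS1
  set S2 := T.filter (fun v => (v+1) ∈ (A++C++B++D) ∧
    (A++C++B++D).idxOf v + 1 < (A++C++B++D).idxOf (v+1)) with hS2
  have key : ∀ v ∈ S1 \ S2,
      (v ∈ A ∧ A.idxOf v = A.length - 1 ∧ 0 < A.length) ∨
      (v ∈ B ∧ B.idxOf v = B.length - 1) := by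
    intro v hv
    rw [Finset.mem_sdiff, hS1, hS2, Finset.mem_filter, Finset.mem_filter] at hv
    obtain ⟨⟨hvT, hv1mem, hlt⟩, hnot⟩ := hv
    have hvmem : v ∈ A++B++C++D := hperm.symm.mem_iff.1 (List.mem_toFinset.1 hvT)
    have hv1mem' : (v+1) ∈ A++C++B++D := (perm_move A B C D).mem_iff.1 hv1mem
    have hge : (A++C++B++D).idxOf (v+1) ≤ (A++C++B++D).idxOf v + 1 := by
      by_contra hcon
      exact hnot ⟨hvT, hv1mem', by omega⟩
    have c1 := idx_cases A B C D hnd v hvmem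
    have c2 := idx_cases A B C D hnd (v+1) hv1mem
    rcases c1 with ⟨h1,e1,e1',b1⟩|⟨h1,e1,e1',b1⟩|⟨h1,e1,e1',b1⟩|⟨h1,e1,e1',b1⟩ <;>
      rcases c2 with ⟨h2,e2,e2',b2⟩|⟨h2,e2,e2',b2⟩|⟨h2,e2,e2',b2⟩|⟨h2,e2,e2',b2⟩ <;>
      first
        | omega
        | (exact Or.inl ⟨h1, by omega, by omega⟩)
        | (exact Or.inr ⟨h1, by omega⟩)
        | (exact absurd (hm _ h1 _ h2) (by omega))
  have hsub : S1 \ S2 ⊆ {A.getD (A.length - 1) 0, B.getD (B.length - 1) 0} := by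
    intro v hv
    rcases key v hv with ⟨h1, h2, _⟩ | ⟨h1, h2⟩
    · exact Finset.mem_insert.2 (Or.inl (last_elem_eq h1 h2))
    · refine Finset.mem_insert.2 (Or.inr ?_)
      rw [Finset.mem_singleton]
      exact last_elem_eq h1 h2
  have hcard2 : (S1 \ S2).card ≤ 2 :=
    (Finset.card_le_card hsub).trans ((Finset.card_insert_le _ _).trans (by simp))
  calc S1.card ≤ (S1 \ S2).card + S2.card := Finset.card_le_card_sdiff_add_card
    _ ≤ S2.card + 2 := by omega







lemma idL_nodup (n : ℕ) : (idL n).Nodup :=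
  (List.nodup_range).map (fun a b h => by omega)

lemma key_ind (n : ℕ) : ∀ t : ℕ, ∀ l : List ℕ, l.Perm (idL n) →
    SortsIn IsMonotoneBlockMove l (idL n) t →
    bp n l ≤ 3 * t ∧ des n l ≤ t ∧ gap n l ≤ 2 * t ∧
      invDes l ≤ t ∧ invGap l ≤ 2 * t := by
  intro t
  induction t with
  | zero =>
    rintro l hp ⟨c, h0, ht, -⟩
    have hl : l = idL n := by rw [← h0, ht]
    subst hl
    refine ⟨?_, ?_, ?_, ?_, ?_⟩
    · rw [show bp n (idL n) = adjCount (fun a b => b ≠ a + 1) n (idL n) from rfl,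
        adjCount_idL _ _ (fun a => by simp)]
    · rw [show des n (idL n) = adjCount (fun a b => b < a) n (idL n) from rfl,
        adjCount_idL _ _ (fun a => by simp)]
    · rw [show gap n (idL n) = adjCount (fun a b => a + 1 < b) n (idL n) from rfl,
        adjCount_idL _ _ (fun a => by simp)]
    · rw [invDes_idL]
    · rw [invGap_idL]
  | succ t ih =>
    rintro l hp ⟨c, h0, ht, hmv⟩
    obtain ⟨A, B, C, D, hB, hC, hmono, hl, hl'⟩ := hmv 0 (by omega)
    rw [h0] at hl
    have hnext : SortsIn IsMonotoneBlockMove (c 1) (idL n) t :=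
      ⟨fun i => c (i + 1), rfl, ht, fun i hi => hmv (i + 1) (by omega)⟩
    have hperm : l.Perm (c 1) := by
      rw [hl, hl']; exact perm_move A B C D
    have IH := ih (c 1) (hperm.symm.trans hp) hnext
    have hnd : l.Nodup := hp.nodup_iff.2 (idL_nodup n)
    rw [hl] at hnd
    have m1 := move_bp n A B C D hB hC
    have m2 := move_des n A B C D hB hC hmono
    have m3 := move_gap n A B C D hB hC hmono
    have m4 := move_invDes A B C D hnd hmono
    have m5 := move_invGap A B C D hB hmono hnd
    rw [hl]
    rw [show c 1 = A ++ C ++ B ++ D from hl'] at IH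
    unfold bp des gap at *
    obtain ⟨i1, i2, i3, i4, i5⟩ := IH
    exact ⟨by omega, by omega, by omega, by omega, by omega⟩


/-- Lower bound: any sorting of `π` by `t` monotone block moves satisfies
`t ≥ max(bp(π)/3, des(π), gap(π)/2, des(π⁻¹), gap(π⁻¹)/2)`, where inverse
descents/gaps of `π` are the descents/gaps of `π⁻¹`. -/
theorem monotone_sorting_lower_bound (n : ℕ) (l : List ℕ)
    (hl : IsPermList n l) (t : ℕ)
    (hsort : SortsIn IsMonotoneBlockMove l (idL n) t) :
    bp n l ≤ 3 * t ∧ des n l ≤ t ∧ gap n l ≤ 2 * t ∧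
      invDes l ≤ t ∧ invGap l ≤ 2 * t :=
  key_ind n t l hl hsort
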